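/- Let $2 \leq n \leq m$ with $m = pn$, let $u_1, \dots, u_n$ be the vertices of $P_n$ and $v_1, \dots, v_m$ the vertices of $P_m$ (regular polygons inscribed in the unit circle with geodesic metric). Then the correspondence $R = \bigcup_{i=1}^{n}\{(u_i, v_{pi-k}) : k = 0, \dots, p-1\}$ has distortion $\operatorname{dis} R \leq \frac{2(p-1)\pi}{pn}$. -/

import Mathlib

open Real

noncomputable def Pvert (n : ℕ) : Set (AddCircle (2 * π)) :=
  Set.range fun j : Fin n => ((2 * π * j / n : ℝ) : AddCircle (2 * π))

instance (n : ℕ) : Finite (Pvert n) := by unfold Pvert; exact (Set.finite_range _).to_subtype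

def IsCorr {X Y : Type*} (R : Set (X × Y)) : Prop :=
  (∀ x, ∃ y, (x, y) ∈ R) ∧ (∀ y, ∃ x, (x, y) ∈ R)

noncomputable def corrDis {X Y : Type*} [MetricSpace X] [MetricSpace Y]
    (R : Set (X × Y)) : ℝ :=
  sSup {r | ∃ p ∈ R, ∃ q ∈ R, r = |dist p.1 q.1 - dist p.2 q.2|}

noncomputable def ghCorrDist (X Y : Type*) [MetricSpace X] [MetricSpace Y] : ℝ :=
  (1 / 2) * sInf {r | ∃ R : Set (X × Y), IsCorr R ∧ r = corrDis R}

lemma norm_coe_le_abs (T x : ℝ) : ‖(x : AddCircle T)‖ ≤ |x| := by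
  simpa using QuotientAddGroup.norm_mk_le_norm (S := AddSubgroup.zmultiples T) (m := x)

lemma dist_coe_eq_norm (T a b : ℝ) :
    dist (a : AddCircle T) b = ‖((a - b : ℝ) : AddCircle T)‖ := by
  rw [dist_eq_norm]; norm_cast

lemma key (T a b c d : ℝ) :
    |dist (a : AddCircle T) b - dist (c : AddCircle T) d| ≤ |(a - b) - (c - d)| := by
  rw [dist_coe_eq_norm, dist_coe_eq_norm]
  refine (abs_norm_sub_norm_le _ _).trans ?_
  have : ((a - b : ℝ) : AddCircle T) - ((c - d : ℝ) : AddCircle T)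
      = (((a - b) - (c - d) : ℝ) : AddCircle T) := by norm_cast
  rw [this]
  exact norm_coe_le_abs _ _

set_option maxHeartbeats 1000000 in
/-- The correspondence `R = ⋃ᵢ {(uᵢ, v_{pi-k}) : k = 0, …, p-1}` between `Pₙ` and `P_{pn}`
has distortion at most `2(p-1)π/(pn)`.  (Distances of points of `Pvert n`, `Pvert (p*n)`
are computed in the ambient circle, where they coincide with the subspace metric.) -/
theorem stmt5 (n p : ℕ) (hn : 2 ≤ n) (hp : 1 ≤ p) :
    let R : Set (AddCircle (2 * π) × AddCircle (2 * π)) :=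
      {q | ∃ i : Fin n, ∃ k : Fin p,
        q.1 = ((2 * π * i / n : ℝ) : AddCircle (2 * π)) ∧
        q.2 = ((2 * π * ((p : ℝ) * i - k) / (p * n) : ℝ) : AddCircle (2 * π))}
    (∀ x ∈ Pvert n, ∃ y ∈ Pvert (p * n), (x, y) ∈ R) ∧
    (∀ y ∈ Pvert (p * n), ∃ x ∈ Pvert n, (x, y) ∈ R) ∧
    corrDis R ≤ 2 * ((p : ℝ) - 1) * π / (p * n) := by
  intro R
  have hn0 : (0 : ℝ) < n := by positivity
  have hp0 : (0 : ℝ) < p := by exact_mod_cast hp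
  have hpn : 0 < p * n := Nat.mul_pos hp (by omega)
  refine ⟨?_, ?_, ?_⟩
  · rintro x ⟨j, rfl⟩
    have hj : p * (j : ℕ) < p * n := (mul_lt_mul_iff_right₀ (by omega : 0 < p)).2 j.2
    refine ⟨((2 * π * ((p : ℝ) * j) / (p * n) : ℝ) : AddCircle (2 * π)), ⟨⟨p * j, hj⟩, ?_⟩,
      j, ⟨0, hp⟩, rfl, ?_⟩
    · push_cast
      ring_nf
    · push_cast
      ring_nf
  · rintro y ⟨j, rfl⟩
    by_cases hc : (j : ℕ) ≤ p * (n - 1)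
    · have hdm := Nat.div_add_mod ((j : ℕ) + p - 1) p
      have hmod : ((j : ℕ) + p - 1) % p < p := Nat.mod_lt _ (by omega)
      set i : ℕ := ((j : ℕ) + p - 1) / p with hi
      have h1 : (j : ℕ) ≤ p * i := by omega
      have h2 : p * i ≤ (j : ℕ) + p - 1 := by omega
      have hsn : p * (n - 1) + p = p * n := by rw [← Nat.mul_succ]; congr 1; omega
      have hiltn : i < n := by
        have hlt : p * i < p * n := by omega
        exact Nat.lt_of_mul_lt_mul_left hlt
      have hklt : p * i - (j : ℕ) < p := by omega
      refine ⟨_, ⟨⟨i, hiltn⟩, rfl⟩, ⟨i, hiltn⟩, ⟨p * i - (j : ℕ), hklt⟩, rfl, ?_⟩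
      have hcast : ((p * i - (j : ℕ) : ℕ) : ℝ) = (p : ℝ) * i - j := by
        push_cast [Nat.cast_sub h1]; ring
      exact congrArg (fun r : ℝ => (r : AddCircle (2 * π))) (by
        show (2 * π * (j : ℝ) / ((p * n : ℕ) : ℝ) : ℝ) = _
        simp only [Fin.val_mk, hcast]
        push_cast
        have hpn' : (p : ℝ) * n ≠ 0 := by positivity
        field_simp; ring)
    · -- j > p*(n-1): use i = 0, k = p*n - j
      push_neg at hc
      have hjlt : (j : ℕ) < p * n := j.2
      have hk1 : 1 ≤ p * n - (j : ℕ) := by omega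
      have hklt : p * n - (j : ℕ) < p := by
        have hsn : p * (n - 1) + p = p * n := by rw [← Nat.mul_succ]; congr 1; omega
        omega
      refine ⟨_, ⟨⟨0, by omega⟩, rfl⟩, ⟨0, by omega⟩, ⟨p * n - (j : ℕ), hklt⟩, ?_, ?_⟩
      · norm_num
      · have hshift : ∀ a : ℝ, ((a - 2 * π : ℝ) : AddCircle (2 * π)) = (a : AddCircle (2 * π)) := by
          intro a
          rw [AddCircle.coe_sub, AddCircle.coe_period, sub_zero]
        show ((2 * π * (j : ℝ) / (((p * n : ℕ)) : ℝ) : ℝ) : AddCircle (2 * π)) = _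
        rw [← hshift (2 * π * (j : ℝ) / (((p * n : ℕ) : ℝ)))]
        refine congrArg (fun r : ℝ => (r : AddCircle (2 * π))) ?_
        simp only [Fin.val_mk]
        rw [show ((p * n - (j : ℕ) : ℕ) : ℝ) = (p : ℝ) * n - j by
          push_cast [Nat.cast_sub (le_of_lt hjlt)]; ring]
        have hpn' : (p : ℝ) * n ≠ 0 := by positivity
        push_cast
        field_simp
        ring
  · apply Real.sSup_le
    · rintro r ⟨⟨x1, y1⟩, ⟨i1, k1, hx1, hy1⟩, ⟨x2, y2⟩, ⟨i2, k2, hx2, hy2⟩, rfl⟩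
      simp only at hx1 hy1 hx2 hy2
      subst hx1 hy1 hx2 hy2
      refine (key _ _ _ _ _).trans ?_
      have heq : (2 * π * (i1 : ℝ) / n - 2 * π * i2 / n)
          - (2 * π * ((p : ℝ) * i1 - k1) / (p * n) - 2 * π * ((p : ℝ) * i2 - k2) / (p * n))
          = 2 * π * ((k1 : ℝ) - k2) / (p * n) := by
        field_simp
        ring
      rw [heq]
      have hk : |(k1 : ℝ) - k2| ≤ (p : ℝ) - 1 := by
        have h1 : (k1 : ℝ) ≤ (p : ℝ) - 1 := by
          have := k1.2; have : ((k1 : ℕ) : ℝ) ≤ (p : ℝ) - 1 := by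
            have : (k1 : ℕ) ≤ p - 1 := by omega
            have := Nat.cast_le (α := ℝ).2 this
            push_cast [Nat.cast_sub hp] at this
            linarith
          exact this
        have h2 : (k2 : ℝ) ≤ (p : ℝ) - 1 := by
          have := k2.2; have : ((k2 : ℕ) : ℝ) ≤ (p : ℝ) - 1 := by
            have : (k2 : ℕ) ≤ p - 1 := by omega
            have := Nat.cast_le (α := ℝ).2 this
            push_cast [Nat.cast_sub hp] at this
            linarith
          exact this
        have h3 : (0 : ℝ) ≤ (k1 : ℝ) := by positivity
        have h4 : (0 : ℝ) ≤ (k2 : ℝ) := by positivity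
        rw [abs_le]; constructor <;> linarith
      rw [abs_div, abs_mul, abs_mul]
      rw [abs_of_pos (by positivity : (0:ℝ) < (p : ℝ) * n)]
      rw [abs_of_pos (by norm_num : (0:ℝ) < 2), abs_of_pos pi_pos]
      rw [show (2 : ℝ) * ((p : ℝ) - 1) * π / (p * n) = 2 * π * ((p : ℝ) - 1) / (p * n) by ring]
      gcongr
    · have h1 : (1:ℝ) ≤ (p:ℝ) := by exact_mod_cast hp
      apply div_nonneg (by nlinarith [pi_pos]) (by positivity)
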